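/- In a graph embedding, if the four flags of an edge e form an entire connected component (orbit of ⟨θ,σ,φ⟩), then either e is a loop at a vertex incident only with e, or e joins two vertices of size 2; in the first case deleting e decreases the genus by 2 − k where k ∈ {1,2} is the number of faces incident with e, and in the second case deleting e leaves the genus unchanged. -/

import Mathlib

def FPF {F : Type*} (π : Equiv.Perm F) : Prop := π * π = 1 ∧ ∀ x, π x ≠ x

def orbSet {F : Type*} (S : Set (Equiv.Perm F)) (x : F) : Set F :=
  MulAction.orbit (Subgroup.closure S) x

noncomputable def orbCount {F : Type*} (S : Set (Equiv.Perm F)) : ℕ :=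
  Nat.card (MulAction.orbitRel.Quotient (Subgroup.closure S) F)

noncomputable def genus {F : Type*} (θ σ' φ' : Equiv.Perm F) : ℤ :=
  (orbCount {θ, σ'} : ℤ) - orbCount {σ', φ'} - orbCount {θ, φ'} + 2 * orbCount {θ, σ', φ'}

def IsGraphEmb {F : Type*} (θ σ' φ' : Equiv.Perm F) : Prop :=
  FPF θ ∧ FPF σ' ∧ FPF φ' ∧ ∀ x : F, Nat.card (orbSet {θ, σ'} x) = 4

def IsEdgeDeletion {F : Type*} (σ' φ' : Equiv.Perm F) (e : Set F)
    (θ₀ σ₀ φ₀ : Equiv.Perm {f : F // f ∉ e}) (θ : Equiv.Perm F) : Prop :=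
  (∀ a : {f : F // f ∉ e}, (θ₀ a : F) = θ a ∧ (σ₀ a : F) = σ' a) ∧
  (∀ a : {f : F // f ∉ e}, ∃ m : ℕ,
     ((φ' * σ') ^ m) (φ' a) ∉ e ∧ (∀ j < m, ((φ' * σ') ^ j) (φ' a) ∈ e) ∧
     (φ₀ a : F) = ((φ' * σ') ^ m) (φ' a))

/-! ### Auxiliary lemmas -/

lemma mem_orbSet_self {F : Type*} (S : Set (Equiv.Perm F)) (x : F) : x ∈ orbSet S x :=
  MulAction.mem_orbit_self x

lemma orbSet_eq_of_mem {F : Type*} {S : Set (Equiv.Perm F)} {x y : F}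
    (h : y ∈ orbSet S x) : orbSet S y = orbSet S x :=
  MulAction.orbit_eq_iff.mpr h

lemma apply_mem_orbSet {F : Type*} {S : Set (Equiv.Perm F)} {s : Equiv.Perm F}
    (hs : s ∈ S) {x y : F} (h : y ∈ orbSet S x) : s y ∈ orbSet S x := by
  obtain ⟨g, hg⟩ := h
  exact ⟨(⟨s, Subgroup.subset_closure hs⟩ : Subgroup.closure S) * g, by
    simp only [mul_smul, hg]; rfl⟩

/-- Minimality of the orbit: if `T` is closed under every `s ∈ S` (a set of involutions)
and contains `y`, then the orbit of `y` is contained in `T`. -/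
lemma orbSet_subset {F : Type*} {S : Set (Equiv.Perm F)} (hS : ∀ s ∈ S, s * s = 1)
    {T : Set F} (hT : ∀ s ∈ S, ∀ y ∈ T, s y ∈ T) {y : F} (hy : y ∈ T) :
    orbSet S y ⊆ T := by
  rintro z ⟨⟨g, hg⟩, rfl⟩
  have key : ∀ (g : Equiv.Perm F), g ∈ Subgroup.closure S →
      (∀ w ∈ T, g w ∈ T) ∧ (∀ w ∈ T, g⁻¹ w ∈ T) := by
    intro g hg
    induction hg using Subgroup.closure_induction with
    | mem s hs =>
        have h1 : ∀ w ∈ T, s w ∈ T := hT s hs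
        refine ⟨h1, fun w hw => ?_⟩
        have : s⁻¹ = s := inv_eq_of_mul_eq_one_left (hS s hs)
        rw [this]; exact h1 w hw
    | one => simp
    | mul a b ha hb iha ihb =>
        refine ⟨fun w hw => ?_, fun w hw => ?_⟩
        · simpa using iha.1 _ (ihb.1 w hw)
        · simpa using ihb.2 _ (iha.2 w hw)
    | inv a ha iha => exact ⟨iha.2, by simpa using iha.1⟩
  exact (key g hg).1 y hy

lemma orbCount_eq_range {F : Type*} (S : Set (Equiv.Perm F)) :
    orbCount S = Nat.card (Set.range fun y => orbSet S y) := by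
  refine Nat.card_eq_of_bijective
    (fun q => Quotient.liftOn q (fun y => (⟨orbSet S y, y, rfl⟩ : Set.range fun y => orbSet S y))
      (fun a b hab => ?_)) ⟨?_, ?_⟩
  · ext1
    exact MulAction.orbit_eq_iff.mpr hab
  · intro q1 q2 hq
    obtain ⟨a, rfl⟩ := Quotient.exists_rep q1
    obtain ⟨b, rfl⟩ := Quotient.exists_rep q2
    simp only [Quotient.liftOn_mk, Subtype.mk.injEq] at hq
    exact Quotient.sound (MulAction.orbit_eq_iff.mp (congrArg Subtype.val hq))
  · rintro ⟨O, y, rfl⟩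
    exact ⟨⟦y⟧, rfl⟩

lemma orbCount_split {F : Type*} [Fintype F] {S : Set (Equiv.Perm F)}
    (hS : ∀ s ∈ S, s * s = 1) {e : Set F} (he : ∀ s ∈ S, ∀ y ∈ e, s y ∈ e) :
    orbCount S = Nat.card ((fun y => orbSet S y) '' e) +
      Nat.card ((fun y => orbSet S y) '' eᶜ) := by
  rw [orbCount_eq_range, ← Set.image_univ, ← Set.union_compl_self e, Set.image_union,
    Nat.card_coe_set_eq, Nat.card_coe_set_eq, Nat.card_coe_set_eq]
  refine Set.ncard_union_eq ?_ (Set.toFinite _) (Set.toFinite _)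
  rw [Set.disjoint_left]
  rintro O ⟨y, hy, rfl⟩ ⟨z, hz, hO⟩
  exact hz (orbSet_subset hS he hy (by simp only [] at hO; rw [← hO]; exact mem_orbSet_self S z))

/-- transfer of orbit counting to the subtype complement -/
lemma orbCount_transfer {F : Type*} {e : Set F} {S : Set (Equiv.Perm F)}
    {S₀ : Set (Equiv.Perm {f : F // f ∉ e})}
    (hS : ∀ s ∈ S, s * s = 1)
    (h1 : ∀ s ∈ S, ∃ t ∈ S₀, ∀ a : {f : F // f ∉ e}, (t a : F) = s a)
    (h2 : ∀ t ∈ S₀, ∃ s ∈ S, ∀ a : {f : F // f ∉ e}, (t a : F) = s a) :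
    orbCount S₀ = Nat.card ((fun y => orbSet S y) '' eᶜ) := by
  have hS₀ : ∀ t ∈ S₀, t * t = 1 := by
    intro t ht
    obtain ⟨s, hs, hts⟩ := h2 t ht
    ext a
    have h3 : (t (t a) : F) = ↑a := by
      rw [hts, hts, ← Equiv.Perm.mul_apply, hS s hs, Equiv.Perm.one_apply]
    simpa [Equiv.Perm.mul_apply, Subtype.ext_iff] using h3
  have key : ∀ a : {f : F // f ∉ e}, Subtype.val '' orbSet S₀ a = orbSet S (a : F) := by
    intro a
    apply Set.Subset.antisymm
    · rintro _ ⟨b, hb, rfl⟩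
      have : orbSet S₀ a ⊆ {b | (b : F) ∈ orbSet S (a : F)} := by
        refine orbSet_subset hS₀ ?_ (mem_orbSet_self S (a : F))
        intro t ht b hb
        obtain ⟨s, hs, hts⟩ := h2 t ht
        simpa [hts] using apply_mem_orbSet hs hb
      exact this hb
    · refine orbSet_subset hS ?_ ⟨a, mem_orbSet_self S₀ a, rfl⟩
      rintro s hs _ ⟨b, hb, rfl⟩
      obtain ⟨t, ht, hts⟩ := h1 s hs
      exact ⟨t b, apply_mem_orbSet ht hb, (hts b)⟩
  rw [orbCount_eq_range]
  refine Nat.card_eq_of_bijective (fun O =>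
    ⟨Subtype.val '' (O : Set {f : F // f ∉ e}), ?_⟩) ⟨?_, ?_⟩
  · obtain ⟨O, a, rfl⟩ := O
    exact ⟨(a : F), a.2, (key a).symm⟩
  · rintro ⟨O1, a1, rfl⟩ ⟨O2, a2, rfl⟩ hO
    simp only [Subtype.mk.injEq] at hO ⊢
    exact Subtype.ext (Set.image_injective.mpr Subtype.val_injective hO)
  · rintro ⟨O, y, hy, rfl⟩
    exact ⟨⟨orbSet S₀ ⟨y, hy⟩, ⟨y, hy⟩, rfl⟩, Subtype.ext (by simpa using key ⟨y, hy⟩)⟩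

/-- The basic dichotomy for orbits inside a 4-element invariant set. -/
lemma dichotomy {F : Type*} [Fintype F] {S : Set (Equiv.Perm F)}
    (hS : ∀ s ∈ S, s * s = 1) {e : Set F} (hinv : ∀ s ∈ S, ∀ y ∈ e, s y ∈ e)
    {s₁ : Equiv.Perm F} (hs₁ : s₁ ∈ S) (hfpf : ∀ y, s₁ y ≠ y)
    {x : F} (hx : x ∈ e) (hecard : e.ncard = 4) :
    ((fun y => orbSet S y) '' e = {e}) ∨
      (Nat.card ((fun y => orbSet S y) '' e) = 2 ∧ ∀ f ∈ e, Nat.card (orbSet S f) = 2) := by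
  have hsub : ∀ y ∈ e, orbSet S y ⊆ e := fun y hy => orbSet_subset hS hinv hy
  by_cases h1 : orbSet S x = e
  · left
    apply Set.Subset.antisymm
    · rintro _ ⟨y, hy, rfl⟩
      have : y ∈ orbSet S x := h1.symm ▸ hy
      simp only [Set.mem_singleton_iff]
      rw [orbSet_eq_of_mem this, h1]
    · intro O hO
      simp only [Set.mem_singleton_iff] at hO
      exact ⟨x, hx, hO ▸ h1⟩
  · right
    obtain ⟨z, hz, hzO⟩ : ∃ z ∈ e, z ∉ orbSet S x := by
      by_contra hc
      push_neg at hc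
      exact h1 (Set.Subset.antisymm (hsub x hx) hc)
    have hO1sub := hsub x hx
    have hO2sub := hsub z hz
    have hdisj : Disjoint (orbSet S x) (orbSet S z) := by
      rw [Set.disjoint_left]
      intro w hw1 hw2
      exact hzO (orbSet_eq_of_mem hw1 ▸ (orbSet_eq_of_mem hw2).symm ▸ mem_orbSet_self S z)
    have h2a : 1 < (orbSet S x).ncard :=
      (Set.one_lt_ncard_iff (Set.toFinite _)).mpr
        ⟨s₁ x, x, apply_mem_orbSet hs₁ (mem_orbSet_self S x), mem_orbSet_self S x, hfpf x⟩
    have h2b : 1 < (orbSet S z).ncard :=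
      (Set.one_lt_ncard_iff (Set.toFinite _)).mpr
        ⟨s₁ z, z, apply_mem_orbSet hs₁ (mem_orbSet_self S z), mem_orbSet_self S z, hfpf z⟩
    have hunion : (orbSet S x ∪ orbSet S z).ncard = (orbSet S x).ncard + (orbSet S z).ncard :=
      Set.ncard_union_eq hdisj (Set.toFinite _) (Set.toFinite _)
    have hle : (orbSet S x ∪ orbSet S z).ncard ≤ 4 := by
      rw [← hecard]
      exact Set.ncard_le_ncard (Set.union_subset hO1sub hO2sub) (Set.toFinite _)
    have hcx : (orbSet S x).ncard = 2 := by omega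
    have hcz : (orbSet S z).ncard = 2 := by omega
    have hue : orbSet S x ∪ orbSet S z = e := by
      exact Set.eq_of_subset_of_ncard_le (Set.union_subset hO1sub hO2sub) (by omega)
        (Set.toFinite _)
    have horb : ∀ f ∈ e, orbSet S f = orbSet S x ∨ orbSet S f = orbSet S z := by
      intro f hf
      rw [← hue] at hf
      cases hf with
      | inl hf => exact Or.inl (orbSet_eq_of_mem hf)
      | inr hf => exact Or.inr (orbSet_eq_of_mem hf)
    constructor
    · have himg : (fun y => orbSet S y) '' e = {orbSet S x, orbSet S z} := by
        apply Set.Subset.antisymm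
        · rintro _ ⟨y, hy, rfl⟩
          simpa using horb y hy
        · rintro O (rfl | rfl)
          · exact ⟨x, hx, rfl⟩
          · exact ⟨z, hz, rfl⟩
      rw [himg, Nat.card_coe_set_eq]
      apply Set.ncard_pair
      intro hcon
      exact hzO (hcon ▸ mem_orbSet_self S z)
    · intro f hf
      rw [Nat.card_coe_set_eq]
      rcases horb f hf with hh | hh <;> rw [hh] <;> omega

theorem stmt11 {F : Type*} [Fintype F]
    (θ σ' φ' : Equiv.Perm F) (h : IsGraphEmb θ σ' φ') (x : F)
    (e : Set F) (he : e = orbSet {θ, σ'} x)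
    (hcomp : e = orbSet {θ, σ', φ'} x)
    (θ₀ σ₀ φ₀ : Equiv.Perm {f : F // f ∉ e})
    (hdel : IsEdgeDeletion σ' φ' e θ₀ σ₀ φ₀ θ) :
    (Nat.card ((fun f => orbSet {σ', φ'} f) '' e) = 1 ∨
      (Nat.card ((fun f => orbSet {σ', φ'} f) '' e) = 2 ∧
        ∀ f ∈ e, Nat.card (orbSet {σ', φ'} f) = 2)) ∧
    (Nat.card ((fun f => orbSet {σ', φ'} f) '' e) = 1 →
      ∃ k ∈ ({1, 2} : Set ℤ), k = (Nat.card ((fun f => orbSet {θ, φ'} f) '' e) : ℤ) ∧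
        genus θ σ' φ' - genus θ₀ σ₀ φ₀ = 2 - k) ∧
    (Nat.card ((fun f => orbSet {σ', φ'} f) '' e) = 2 →
      genus θ σ' φ' = genus θ₀ σ₀ φ₀) := by
  obtain ⟨⟨hθ2, hθf⟩, ⟨hσ2, hσf⟩, ⟨hφ2, hφf⟩, hcard⟩ := h
  have hxe : x ∈ e := he ▸ mem_orbSet_self _ x
  -- invariance of e
  have heθ : ∀ y ∈ e, θ y ∈ e := by
    intro y hy; rw [he] at hy ⊢; exact apply_mem_orbSet (Set.mem_insert _ _) hy
  have heσ : ∀ y ∈ e, σ' y ∈ e := by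
    intro y hy; rw [he] at hy ⊢; exact apply_mem_orbSet (by simp) hy
  have heφ : ∀ y ∈ e, φ' y ∈ e := by
    intro y hy; rw [hcomp] at hy ⊢
    exact apply_mem_orbSet (show φ' ∈ ({θ, σ', φ'} : Set (Equiv.Perm F)) by simp) hy
  -- involutivity of the four generating sets
  have hSE : ∀ s ∈ ({θ, σ'} : Set (Equiv.Perm F)), s * s = 1 := by
    rintro s (rfl | rfl); exacts [hθ2, hσ2]
  have hSV : ∀ s ∈ ({σ', φ'} : Set (Equiv.Perm F)), s * s = 1 := by
    rintro s (rfl | rfl); exacts [hσ2, hφ2]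
  have hSF : ∀ s ∈ ({θ, φ'} : Set (Equiv.Perm F)), s * s = 1 := by
    rintro s (rfl | rfl); exacts [hθ2, hφ2]
  have hSC : ∀ s ∈ ({θ, σ', φ'} : Set (Equiv.Perm F)), s * s = 1 := by
    rintro s (rfl | rfl | rfl); exacts [hθ2, hσ2, hφ2]
  -- invariance of e under the four generating sets
  have hInvE : ∀ s ∈ ({θ, σ'} : Set (Equiv.Perm F)), ∀ y ∈ e, s y ∈ e := by
    rintro s (rfl | rfl); exacts [heθ, heσ]
  have hInvV : ∀ s ∈ ({σ', φ'} : Set (Equiv.Perm F)), ∀ y ∈ e, s y ∈ e := by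
    rintro s (rfl | rfl); exacts [heσ, heφ]
  have hInvF : ∀ s ∈ ({θ, φ'} : Set (Equiv.Perm F)), ∀ y ∈ e, s y ∈ e := by
    rintro s (rfl | rfl); exacts [heθ, heφ]
  have hInvC : ∀ s ∈ ({θ, σ', φ'} : Set (Equiv.Perm F)), ∀ y ∈ e, s y ∈ e := by
    rintro s (rfl | rfl | rfl); exacts [heθ, heσ, heφ]
  -- the deleted permutations are restrictions
  obtain ⟨hts, hphi⟩ := hdel
  have hθ₀ : ∀ a : {f : F // f ∉ e}, (θ₀ a : F) = θ a := fun a => (hts a).1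
  have hσ₀ : ∀ a : {f : F // f ∉ e}, (σ₀ a : F) = σ' a := fun a => (hts a).2
  have hφ₀ : ∀ a : {f : F // f ∉ e}, (φ₀ a : F) = φ' a := by
    intro a
    obtain ⟨m, hm1, hm2, hm3⟩ := hphi a
    cases m with
    | zero => simpa using hm3
    | succ n =>
        exfalso
        have h0 := hm2 0 (Nat.succ_pos n)
        simp only [pow_zero, Equiv.Perm.coe_one, id_eq] at h0
        have : (a : F) ∈ e := by
          have h4 := heφ _ h0
          rwa [← Equiv.Perm.mul_apply, hφ2, Equiv.Perm.one_apply] at h4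
        exact a.2 this
  -- matchings for the transfer lemma
  have mE1 : ∀ s ∈ ({θ, σ'} : Set (Equiv.Perm F)),
      ∃ t ∈ ({θ₀, σ₀} : Set (Equiv.Perm {f : F // f ∉ e})), ∀ a, (t a : F) = s a := by
    rintro s (rfl | rfl)
    exacts [⟨θ₀, Set.mem_insert _ _, hθ₀⟩, ⟨σ₀, by simp, hσ₀⟩]
  have mE2 : ∀ t ∈ ({θ₀, σ₀} : Set (Equiv.Perm {f : F // f ∉ e})),
      ∃ s ∈ ({θ, σ'} : Set (Equiv.Perm F)), ∀ a, (t a : F) = s a := by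
    rintro t (rfl | rfl)
    exacts [⟨θ, Set.mem_insert _ _, hθ₀⟩, ⟨σ', by simp, hσ₀⟩]
  have mV1 : ∀ s ∈ ({σ', φ'} : Set (Equiv.Perm F)),
      ∃ t ∈ ({σ₀, φ₀} : Set (Equiv.Perm {f : F // f ∉ e})), ∀ a, (t a : F) = s a := by
    rintro s (rfl | rfl)
    exacts [⟨σ₀, Set.mem_insert _ _, hσ₀⟩, ⟨φ₀, by simp, hφ₀⟩]
  have mV2 : ∀ t ∈ ({σ₀, φ₀} : Set (Equiv.Perm {f : F // f ∉ e})),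
      ∃ s ∈ ({σ', φ'} : Set (Equiv.Perm F)), ∀ a, (t a : F) = s a := by
    rintro t (rfl | rfl)
    exacts [⟨σ', Set.mem_insert _ _, hσ₀⟩, ⟨φ', by simp, hφ₀⟩]
  have mF1 : ∀ s ∈ ({θ, φ'} : Set (Equiv.Perm F)),
      ∃ t ∈ ({θ₀, φ₀} : Set (Equiv.Perm {f : F // f ∉ e})), ∀ a, (t a : F) = s a := by
    rintro s (rfl | rfl)
    exacts [⟨θ₀, Set.mem_insert _ _, hθ₀⟩, ⟨φ₀, by simp, hφ₀⟩]
  have mF2 : ∀ t ∈ ({θ₀, φ₀} : Set (Equiv.Perm {f : F // f ∉ e})),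
      ∃ s ∈ ({θ, φ'} : Set (Equiv.Perm F)), ∀ a, (t a : F) = s a := by
    rintro t (rfl | rfl)
    exacts [⟨θ, Set.mem_insert _ _, hθ₀⟩, ⟨φ', by simp, hφ₀⟩]
  have mC1 : ∀ s ∈ ({θ, σ', φ'} : Set (Equiv.Perm F)),
      ∃ t ∈ ({θ₀, σ₀, φ₀} : Set (Equiv.Perm {f : F // f ∉ e})), ∀ a, (t a : F) = s a := by
    rintro s (rfl | rfl | rfl)
    exacts [⟨θ₀, Set.mem_insert _ _, hθ₀⟩, ⟨σ₀, by simp, hσ₀⟩, ⟨φ₀, by simp, hφ₀⟩]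
  have mC2 : ∀ t ∈ ({θ₀, σ₀, φ₀} : Set (Equiv.Perm {f : F // f ∉ e})),
      ∃ s ∈ ({θ, σ', φ'} : Set (Equiv.Perm F)), ∀ a, (t a : F) = s a := by
    rintro t (rfl | rfl | rfl)
    exacts [⟨θ, Set.mem_insert _ _, hθ₀⟩, ⟨σ', by simp, hσ₀⟩, ⟨φ', by simp, hφ₀⟩]
  -- the four decomposition equations
  have EqE : orbCount {θ, σ'} = Nat.card ((fun y => orbSet {θ, σ'} y) '' e) +
      orbCount ({θ₀, σ₀} : Set (Equiv.Perm {f : F // f ∉ e})) := by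
    rw [orbCount_split hSE hInvE, orbCount_transfer hSE mE1 mE2]
  have EqV : orbCount {σ', φ'} = Nat.card ((fun y => orbSet {σ', φ'} y) '' e) +
      orbCount ({σ₀, φ₀} : Set (Equiv.Perm {f : F // f ∉ e})) := by
    rw [orbCount_split hSV hInvV, orbCount_transfer hSV mV1 mV2]
  have EqF : orbCount {θ, φ'} = Nat.card ((fun y => orbSet {θ, φ'} y) '' e) +
      orbCount ({θ₀, φ₀} : Set (Equiv.Perm {f : F // f ∉ e})) := by
    rw [orbCount_split hSF hInvF, orbCount_transfer hSF mF1 mF2]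
  have EqC : orbCount {θ, σ', φ'} = Nat.card ((fun y => orbSet {θ, σ', φ'} y) '' e) +
      orbCount ({θ₀, σ₀, φ₀} : Set (Equiv.Perm {f : F // f ∉ e})) := by
    rw [orbCount_split hSC hInvC, orbCount_transfer hSC mC1 mC2]
  -- orbits of points of e under the edge and component sets are all of e
  have hEorb : ∀ y ∈ e, orbSet {θ, σ'} y = e := by
    intro y hy; rw [he] at hy ⊢; exact orbSet_eq_of_mem hy
  have hCorb : ∀ y ∈ e, orbSet {θ, σ', φ'} y = e := by
    intro y hy; rw [hcomp] at hy ⊢; exact orbSet_eq_of_mem hy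
  have cardE : Nat.card ((fun y => orbSet {θ, σ'} y) '' e) = 1 := by
    have himg : (fun y => orbSet {θ, σ'} y) '' e = {e} := Set.Subset.antisymm
      (by rintro _ ⟨y, hy, rfl⟩; simpa using hEorb y hy)
      (by intro O hO; simp only [Set.mem_singleton_iff] at hO; exact ⟨x, hxe, hO ▸ hEorb x hxe⟩)
    rw [himg, Nat.card_coe_set_eq, Set.ncard_singleton]
  have cardC : Nat.card ((fun y => orbSet {θ, σ', φ'} y) '' e) = 1 := by
    have himg : (fun y => orbSet {θ, σ', φ'} y) '' e = {e} := Set.Subset.antisymm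
      (by rintro _ ⟨y, hy, rfl⟩; simpa using hCorb y hy)
      (by intro O hO; simp only [Set.mem_singleton_iff] at hO; exact ⟨x, hxe, hO ▸ hCorb x hxe⟩)
    rw [himg, Nat.card_coe_set_eq, Set.ncard_singleton]
  rw [cardE] at EqE
  rw [cardC] at EqC
  -- e has four elements
  have hne4 : e.ncard = 4 := by
    have h4 := hcard x
    rw [← he, Nat.card_coe_set_eq] at h4
    exact h4
  -- the dichotomies for vertices and faces
  have dV := dichotomy hSV hInvV (Set.mem_insert _ _) hσf hxe hne4
  have dF := dichotomy hSF hInvF (Set.mem_insert _ _) hθf hxe hne4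
  have cardV1 : ((fun y => orbSet {σ', φ'} y) '' e = {e}) →
      Nat.card ((fun y => orbSet {σ', φ'} y) '' e) = 1 := fun hh => by
    rw [hh, Nat.card_coe_set_eq, Set.ncard_singleton]
  have cardFcases : Nat.card ((fun y => orbSet {θ, φ'} y) '' e) = 1 ∨
      Nat.card ((fun y => orbSet {θ, φ'} y) '' e) = 2 := by
    rcases dF with hh | hh
    · left; rw [hh, Nat.card_coe_set_eq, Set.ncard_singleton]
    · right; exact hh.1
  -- in the two-vertex case there is exactly one face
  have hface1 : (∀ f ∈ e, Nat.card (orbSet {σ', φ'} f) = 2) →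
      Nat.card ((fun y => orbSet {θ, φ'} y) '' e) = 1 := by
    intro h2
    have hφσ : ∀ f ∈ e, φ' f = σ' f := by
      intro f hf
      by_contra hne
      have h3 : 2 < (orbSet {σ', φ'} f).ncard := by
        refine (Set.two_lt_ncard_iff (Set.toFinite _)).mpr
          ⟨f, σ' f, φ' f, mem_orbSet_self _ f,
            apply_mem_orbSet (Set.mem_insert _ _) (mem_orbSet_self _ f),
            apply_mem_orbSet (by simp) (mem_orbSet_self _ f),
            fun hc => hσf f hc.symm, fun hc => hφf f hc.symm, fun hc => hne hc.symm⟩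
      rw [← Nat.card_coe_set_eq, h2 f hf] at h3
      omega
    have horb : ∀ y ∈ e, orbSet {θ, φ'} y = e := by
      intro y hy
      apply Set.Subset.antisymm (orbSet_subset hSF hInvF hy)
      have hsubT : orbSet {θ, σ'} y ⊆ orbSet {θ, φ'} y ∩ e := by
        refine orbSet_subset hSE ?_ ⟨mem_orbSet_self _ y, hy⟩
        rintro s (rfl | rfl) w ⟨hw1, hw2⟩
        · exact ⟨apply_mem_orbSet (Set.mem_insert _ _) hw1, heθ w hw2⟩
        · refine ⟨?_, heσ w hw2⟩
          rw [← hφσ w hw2]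
          exact apply_mem_orbSet (by simp) hw1
      rw [hEorb y hy] at hsubT
      exact fun w hw => (hsubT hw).1
    have himg : (fun y => orbSet {θ, φ'} y) '' e = {e} := Set.Subset.antisymm
      (by rintro _ ⟨y, hy, rfl⟩; simpa using horb y hy)
      (by intro O hO; simp only [Set.mem_singleton_iff] at hO; exact ⟨x, hxe, hO ▸ horb x hxe⟩)
    rw [himg, Nat.card_coe_set_eq, Set.ncard_singleton]
  refine ⟨?_, ?_, ?_⟩
  · rcases dV with hh | hh
    · exact Or.inl (cardV1 hh)
    · exact Or.inr hh
  · intro hV1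
    refine ⟨(Nat.card ((fun f => orbSet {θ, φ'} f) '' e) : ℤ), ?_, rfl, ?_⟩
    · rcases cardFcases with hh | hh <;> rw [hh] <;> simp
    · simp only [genus]
      rw [EqE, EqV, EqF, EqC, hV1]
      push_cast
      ring
  · intro hV2
    have hall : ∀ f ∈ e, Nat.card (orbSet {σ', φ'} f) = 2 := by
      rcases dV with hh | hh
      · rw [cardV1 hh] at hV2; omega
      · exact hh.2
    have hF1 := hface1 hall
    simp only [genus]
    rw [EqE, EqV, EqF, EqC, hV2, hF1]
    push_cast
    ring
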